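/- Let g be nonnegative, monotone decreasing on [0,∞) with g(0) < ∞, and k nonnegative integrable with tail h(t) = ∫_t^∞ k(s) ds. Then for every n ≥ 1 and t ≥ 0, the iterated integral ∫_{0<u_1<⋯<u_n<t} g(t−u_n) ∏_{i=1}^n k(u_i − u_{i−1}) du_1⋯du_n (with u_0 = 0) is bounded by (2^n − 1) g(0) h(0)^{n−1} h(t/2^n) + h(0)^n g(t/2^n). -/

import Mathlib

open MeasureTheory Set Filter

private lemma prod_setIntegral_pi {N : ℕ} (K : ℝ → ℝ)
    (C : Fin N → Set ℝ) (hC : ∀ i, MeasurableSet (C i)) :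
    ∫ v in Set.pi Set.univ C, ∏ i, K (v i) = ∏ i, ∫ x in C i, K x := by
  have h1 : ∀ v : Fin N → ℝ, (Set.pi Set.univ C).indicator (fun v => ∏ i, K (v i)) v
      = ∏ i, (C i).indicator K (v i) := by
    intro v
    by_cases hv : v ∈ Set.pi Set.univ C
    · rw [Set.indicator_of_mem hv]
      exact Finset.prod_congr rfl fun i _ => (Set.indicator_of_mem (hv i (Set.mem_univ i)) K).symm
    · rw [Set.indicator_of_notMem hv]
      rw [Set.mem_pi] at hv
      push_neg at hv
      obtain ⟨i, _, hi⟩ := hv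
      exact (Finset.prod_eq_zero (Finset.mem_univ i) (Set.indicator_of_notMem hi K)).symm
  rw [← MeasureTheory.integral_indicator (MeasurableSet.univ_pi hC)]
  simp_rw [h1]
  rw [MeasureTheory.integral_fintype_prod_volume_eq_prod (fun i => (C i).indicator K)]
  exact Finset.prod_congr rfl fun i _ => MeasureTheory.integral_indicator (hC i)

theorem gronwall_part_ii (g k h : ℝ → ℝ)
    (hg_nonneg : ∀ t ∈ Ici (0:ℝ), 0 ≤ g t)
    (hg_anti : AntitoneOn g (Ici 0))
    (hk_nonneg : ∀ t ∈ Ici (0:ℝ), 0 ≤ k t)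
    (hk_int : IntegrableOn k (Ici 0))
    (hh : ∀ t, h t = ∫ s in Ioi t, k s)
    (n : ℕ) (hn : 1 ≤ n) (t : ℝ) (ht : 0 ≤ t) :
    (∫ u in {u : Fin n → ℝ | (∀ i, 0 < u i ∧ u i < t) ∧
        ∀ i j : Fin n, i < j → u i < u j},
      g (t - u ⟨n - 1, by omega⟩) *
        ∏ i : Fin n, k (u i -
          if (i : ℕ) = 0 then 0
          else u ⟨(i : ℕ) - 1, Nat.lt_of_le_of_lt (Nat.pred_le _) i.isLt⟩))
      ≤ (2 ^ n - 1) * g 0 * h 0 ^ (n - 1) * h (t / 2 ^ n)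
          + h 0 ^ n * g (t / 2 ^ n) := by
  classical
  obtain ⟨m, rfl⟩ : ∃ m, n = m + 1 := ⟨n - 1, by omega⟩
  -- measurable versions of k and g
  obtain ⟨k', hk'm, hk'ae⟩ := hk_int.1
  set K : ℝ → ℝ := fun x => if 0 ≤ x then max (k' x) 0 else 0 with hKdef
  have hKmeas : Measurable K :=
    Measurable.ite measurableSet_Ici (hk'm.measurable.max measurable_const) measurable_const
  have hKae : k =ᵐ[volume.restrict (Ici 0)] K := by
    filter_upwards [hk'ae, ae_restrict_mem measurableSet_Ici] with x hx1 hx2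
    have h0 : (0:ℝ) ≤ x := hx2
    have hk0 : 0 ≤ k x := hk_nonneg x hx2
    simp only [hKdef, if_pos h0, ← hx1, max_eq_left hk0]
  have hKnn : ∀ x, 0 ≤ K x := by
    intro x; by_cases hx : (0:ℝ) ≤ x <;> simp [hKdef, hx, le_max_right]
  have hKint : Integrable K := by
    have h1 : IntegrableOn K (Ici 0) := hk_int.congr hKae
    have h2 : K = (Ici 0).indicator K := by
      funext x; by_cases hx : (0:ℝ) ≤ x
      · rw [Set.indicator_of_mem (mem_Ici.mpr hx)]
      · rw [Set.indicator_of_notMem (by simpa using hx), hKdef]; simp [hx]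
    rw [h2]
    exact (integrable_indicator_iff measurableSet_Ici).2 h1
  set G : ℝ → ℝ := fun x => g (max x 0) with hGdef
  have hGanti : Antitone G := fun a b hab =>
    hg_anti (mem_Ici.mpr (le_max_right a 0)) (mem_Ici.mpr (le_max_right b 0))
      (max_le_max hab le_rfl)
  have hGmeas : Measurable G := hGanti.measurable
  have hGnn : ∀ x, 0 ≤ G x := fun x => hg_nonneg _ (mem_Ici.mpr (le_max_right x 0))
  have hGle : ∀ x, G x ≤ g 0 := fun x =>
    hg_anti (mem_Ici.mpr le_rfl) (mem_Ici.mpr (le_max_right x 0)) (le_max_right x 0)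
  have hGeq : ∀ x, 0 ≤ x → G x = g x := fun x hx => by
    simp only [hGdef]; rw [max_eq_left hx]
  -- the linear change of variables
  set M : Matrix (Fin (m+1)) (Fin (m+1)) ℝ := fun i j => if j ≤ i then 1 else 0 with hM
  have hMdet : M.det = 1 := by
    rw [Matrix.det_of_lowerTriangular M (by
      intro i j hij
      have hlt : i < j := hij
      simp [hM, hlt.not_ge])]
    simp [hM]
  have hMinv : Invertible M := M.invertibleOfIsUnitDet (by rw [hMdet]; exact isUnit_one)
  set e := M.toLinearEquiv' hMinv with he
  have happ : ∀ (v : Fin (m+1) → ℝ) i, e v i = ∑ j ∈ Finset.Iic i, v j := by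
    intro v i
    have h1 : e v = Matrix.toLin' M v := rfl
    rw [h1, Matrix.toLin'_apply]
    have h2 : M.mulVec v i = ∑ j, M i j * v j := rfl
    rw [h2]
    calc ∑ j, M i j * v j = ∑ j, if j ∈ Finset.Iic i then v j else 0 := by
          apply Finset.sum_congr rfl; intro j _
          by_cases hj : j ≤ i <;> simp [hM, hj]
      _ = ∑ j ∈ Finset.Iic i, v j := by rw [Finset.sum_ite_mem, Finset.univ_inter]
  set meq : (Fin (m+1) → ℝ) ≃ᵐ (Fin (m+1) → ℝ) :=
    { toEquiv := e.toEquiv,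
      measurable_toFun := (LinearMap.continuous_on_pi e.toLinearMap).measurable,
      measurable_invFun := (LinearMap.continuous_on_pi e.symm.toLinearMap).measurable } with hmeq
  have hmp : MeasurePreserving (⇑meq) volume volume := by
    refine ⟨meq.measurable, ?_⟩
    have h1 : ⇑meq = ⇑(Matrix.toLin' M) := rfl
    rw [h1, Real.map_linearMap_volume_pi_eq_smul_volume_pi
      (by rw [LinearMap.det_toLin', hMdet]; norm_num)]
    rw [LinearMap.det_toLin', hMdet]
    norm_num
  -- key pointwise formulas
  have hlastset : Finset.Iic (⟨m + 1 - 1, by omega⟩ : Fin (m+1)) = Finset.univ := by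
    ext j; simp only [Finset.mem_Iic, Finset.mem_univ, iff_true, Fin.le_def]; omega
  have hlast : ∀ v : Fin (m+1) → ℝ, meq v ⟨m + 1 - 1, by omega⟩ = ∑ j, v j := by
    intro v
    have : meq v ⟨m + 1 - 1, by omega⟩ = e v ⟨m + 1 - 1, by omega⟩ := rfl
    rw [this, happ, hlastset]
  have hgap : ∀ (v : Fin (m+1) → ℝ) (i : Fin (m+1)),
      meq v i - (if (i : ℕ) = 0 then 0
        else meq v ⟨(i : ℕ) - 1, Nat.lt_of_le_of_lt (Nat.pred_le _) i.isLt⟩) = v i := by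
    intro v i
    have hm0 : ∀ j, meq v j = e v j := fun _ => rfl
    by_cases h0 : (i : ℕ) = 0
    · have : i = 0 := Fin.ext h0
      subst this
      rw [if_pos h0, hm0, happ, sub_zero]
      have : Finset.Iic (0 : Fin (m+1)) = {0} := by
        ext j; simp [Fin.le_zero_iff]
      rw [this, Finset.sum_singleton]
    · rw [if_neg h0, hm0, hm0, happ, happ]
      have h1 : Finset.Iic (⟨(i : ℕ) - 1, Nat.lt_of_le_of_lt (Nat.pred_le _) i.isLt⟩ : Fin (m+1))
          = Finset.Iio i := by
        ext j; simp only [Finset.mem_Iic, Finset.mem_Iio, Fin.le_def, Fin.lt_def]; omega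
      rw [h1, ← Finset.Iio_insert i, Finset.sum_insert (by simp)]
      ring
  set Sset : Set (Fin (m+1) → ℝ) := {u : Fin (m+1) → ℝ | (∀ i, 0 < u i ∧ u i < t) ∧
      ∀ i j : Fin (m+1), i < j → u i < u j} with hSset
  set Fk : (Fin (m+1) → ℝ) → ℝ := fun u => g (t - u ⟨m + 1 - 1, by omega⟩) *
      ∏ i : Fin (m+1), k (u i -
        if (i : ℕ) = 0 then 0
        else u ⟨(i : ℕ) - 1, Nat.lt_of_le_of_lt (Nat.pred_le _) i.isLt⟩) with hFk
  -- sets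
  set c0 : ℝ := t / 2 ^ (m+1) with hc0def
  have hc0 : 0 ≤ c0 := by positivity
  set T : Set (Fin (m+1) → ℝ) := {v | (∀ i, 0 < v i) ∧ ∑ j, v j < t} with hT
  have msum : Measurable fun v : Fin (m+1) → ℝ => ∑ j, v j :=
    Finset.measurable_sum _ fun j _ => measurable_pi_apply j
  have mT : MeasurableSet T := by
    have hTeq : T = {v : Fin (m+1) → ℝ | ∀ i, 0 < v i} ∩ {v | ∑ j, v j < t} := rfl
    have mpos : MeasurableSet {v : Fin (m+1) → ℝ | ∀ i, 0 < v i} := by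
      have : {v : Fin (m+1) → ℝ | ∀ i, 0 < v i} = ⋂ i, {v | 0 < v i} := by
        ext v; simp
      rw [this]
      exact MeasurableSet.iInter fun i =>
        measurableSet_lt measurable_const (measurable_pi_apply i)
    rw [hTeq]
    exact mpos.inter (measurableSet_lt msum measurable_const)
  set TB : Set (Fin (m+1) → ℝ) := T ∩ {v | ∑ j, v j ≤ t - c0} with hTB
  have mTB : MeasurableSet TB := mT.inter (measurableSet_le msum measurable_const)
  set Ti : Fin (m+1) → Set (Fin (m+1) → ℝ) := fun i => T ∩ {v | c0 < v i} with hTi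
  have mTi : ∀ i, MeasurableSet (Ti i) := fun i =>
    mT.inter (measurableSet_lt measurable_const (measurable_pi_apply i))
  -- preimage identification
  have hpre : ⇑meq ⁻¹' Sset = T := by
    ext v
    simp only [hSset, mem_preimage, mem_setOf_eq, hT]
    constructor
    · rintro ⟨h1, h2⟩
      refine ⟨fun i => ?_, ?_⟩
      · rw [← hgap v i]
        by_cases hi0 : (i : ℕ) = 0
        · rw [if_pos hi0, sub_zero]; exact (h1 i).1
        · rw [if_neg hi0]
          have hlt : (⟨(i : ℕ) - 1, Nat.lt_of_le_of_lt (Nat.pred_le _) i.isLt⟩ : Fin (m+1)) < i := by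
            simp only [Fin.lt_def]; omega
          exact sub_pos.mpr (h2 _ i hlt)
      · rw [← hlast v]
        exact (h1 _).2
    · rintro ⟨h1, h2⟩
      have hmono : ∀ i j : Fin (m+1), i < j → meq v i < meq v j := by
        intro i j hij
        rw [show meq v i = e v i from rfl, show meq v j = e v j from rfl, happ, happ]
        exact Finset.sum_lt_sum_of_subset (Finset.Iic_subset_Iic.2 hij.le)
          (Finset.mem_Iic.2 le_rfl) (by simpa using hij.not_ge) (h1 j)
          fun a _ _ => (h1 a).le
      refine ⟨fun i => ⟨?_, ?_⟩, hmono⟩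
      · rw [show meq v i = e v i from rfl, happ]
        exact Finset.sum_pos (fun j _ => h1 j) ⟨i, Finset.mem_Iic.2 le_rfl⟩
      · calc meq v i ≤ ∑ j, v j := by
              rw [show meq v i = e v i from rfl, happ]
              exact Finset.sum_le_sum_of_subset_of_nonneg (Finset.subset_univ _)
                fun j _ _ => (h1 j).le
          _ < t := h2
  -- the nice integrand
  set F' : (Fin (m+1) → ℝ) → ℝ := fun v => G (t - ∑ j, v j) * ∏ i, K (v i) with hF'
  have hKprodmeas : Measurable fun v : Fin (m+1) → ℝ => ∏ i, K (v i) :=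
    Finset.measurable_prod _ fun i _ => hKmeas.comp (measurable_pi_apply i)
  have hF'meas : Measurable F' := (hGmeas.comp (measurable_const.sub msum)).mul hKprodmeas
  have hKprodint : Integrable (fun v : Fin (m+1) → ℝ => ∏ i, K (v i)) :=
    Integrable.fintype_prod (f := fun _ : Fin (m+1) => K) fun _ => hKint
  have hKprodnn : ∀ v : Fin (m+1) → ℝ, 0 ≤ ∏ i, K (v i) := fun v =>
    Finset.prod_nonneg fun i _ => hKnn _
  have hF'nn : ∀ v, 0 ≤ F' v := fun v => mul_nonneg (hGnn _) (hKprodnn v)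
  have hg0 : 0 ≤ g 0 := hg_nonneg 0 (mem_Ici.mpr le_rfl)
  have hF'le : ∀ v, F' v ≤ g 0 * ∏ i, K (v i) := fun v =>
    mul_le_mul_of_nonneg_right (hGle _) (hKprodnn v)
  have hF'int : Integrable F' := by
    refine (hKprodint.const_mul (g 0)).mono hF'meas.aestronglyMeasurable
      (ae_of_all _ fun v => ?_)
    rw [Real.norm_eq_abs, Real.norm_eq_abs, abs_of_nonneg (hF'nn v),
      abs_of_nonneg (mul_nonneg hg0 (hKprodnn v))]
    exact hF'le v
  -- null-set bookkeeping for replacing k by K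
  have hnull : volume ({x : ℝ | ¬ k x = K x} ∩ Ici 0) = 0 := by
    have h1 := hKae
    rw [EventuallyEq, ae_iff, Measure.restrict_apply' measurableSet_Ici] at h1
    exact h1
  obtain ⟨Nn, hNsub, hNmeas, hNnull⟩ := exists_measurable_superset_of_null hnull
  have hev : ∀ i : Fin (m+1), volume {v : Fin (m+1) → ℝ | v i ∈ Nn} = 0 := by
    intro i
    have hseteq : {v : Fin (m+1) → ℝ | v i ∈ Nn}
        = Set.pi Set.univ (fun j => if j = i then Nn else Set.univ) := by
      ext v
      simp only [mem_setOf_eq, Set.mem_pi, Set.mem_univ, true_implies]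
      constructor
      · intro hv j
        by_cases hj : j = i
        · subst hj; simp [hv]
        · simp [hj]
      · intro hv
        have := hv i
        simpa using this
    rw [hseteq, volume_pi_pi]
    exact Finset.prod_eq_zero (Finset.mem_univ i) (by simp [hNnull])
  have haeN : ∀ᵐ v : Fin (m+1) → ℝ, ∀ i, v i ∉ Nn := by
    rw [ae_all_iff]
    exact fun i => measure_eq_zero_iff_ae_notMem.mp (hev i)
  -- integrals of K over tails
  have hIoiK : ∀ s : ℝ, 0 ≤ s → ∫ x in Ioi s, K x = h s := by
    intro s hs
    rw [hh s]
    have hsub : Ioi s ⊆ Ici (0:ℝ) := fun x hx => le_trans hs (le_of_lt hx)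
    have h4 : k =ᵐ[volume.restrict (Ioi s)] K :=
      ae_restrict_of_ae_restrict_of_subset hsub hKae
    exact integral_congr_ae h4.symm
  have h0nn : 0 ≤ h 0 := by
    rw [← hIoiK 0 le_rfl]
    exact setIntegral_nonneg measurableSet_Ioi fun x _ => hKnn x
  have hcnn : 0 ≤ h c0 := by
    rw [← hIoiK c0 hc0]
    exact setIntegral_nonneg measurableSet_Ioi fun x _ => hKnn x
  have hgc0 : 0 ≤ g c0 := hg_nonneg c0 hc0
  -- piece estimates
  have pieceB : ∫ v in TB, F' v ≤ g c0 * h 0 ^ (m+1) := by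
    have hTBsub : TB ⊆ Set.pi Set.univ (fun _ : Fin (m+1) => Ioi (0:ℝ)) :=
      fun v hv i _ => hv.1.1 i
    have b1 : ∫ v in TB, F' v ≤ ∫ v in TB, g c0 * ∏ i, K (v i) := by
      refine setIntegral_mono_on hF'int.integrableOn
        ((hKprodint.const_mul _).integrableOn) mTB ?_
      intro v hv
      have hle : c0 ≤ t - ∑ j, v j := by
        have h2 := hv.2
        simp only [mem_setOf_eq] at h2
        linarith
      have hG2 : G (t - ∑ j, v j) ≤ g c0 := by
        rw [← hGeq c0 hc0]
        exact hGanti hle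
      exact mul_le_mul_of_nonneg_right hG2 (hKprodnn v)
    have b2 : ∫ v in TB, g c0 * ∏ i, K (v i)
        ≤ ∫ v in Set.pi Set.univ (fun _ : Fin (m+1) => Ioi (0:ℝ)), g c0 * ∏ i, K (v i) :=
      setIntegral_mono_set ((hKprodint.const_mul _).integrableOn)
        (ae_of_all _ fun v => mul_nonneg hgc0 (hKprodnn v))
        (HasSubset.Subset.eventuallyLE hTBsub)
    have b3 : ∫ v in Set.pi Set.univ (fun _ : Fin (m+1) => Ioi (0:ℝ)), g c0 * ∏ i, K (v i)
        = g c0 * h 0 ^ (m+1) := by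
      rw [integral_const_mul, prod_setIntegral_pi K _ (fun _ => measurableSet_Ioi),
        hIoiK 0 le_rfl, Finset.prod_const, Finset.card_univ, Fintype.card_fin]
    linarith
  have pieceA : ∀ i0 : Fin (m+1), ∫ v in Ti i0, F' v ≤ g 0 * (h c0 * h 0 ^ m) := by
    intro i0
    set C : Fin (m+1) → Set ℝ := fun j => if j = i0 then Ioi c0 else Ioi 0 with hC
    have hCm : ∀ j, MeasurableSet (C j) := by
      intro j; by_cases hj : j = i0 <;> simp [hC, hj]
    have hsub : Ti i0 ⊆ Set.pi Set.univ C := by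
      intro v hv j _
      by_cases hj : j = i0
      · subst hj
        simp only [hC, if_pos rfl, mem_Ioi]
        exact hv.2
      · simp only [hC, if_neg hj, mem_Ioi]
        exact hv.1.1 j
    have a1 : ∫ v in Ti i0, F' v ≤ ∫ v in Ti i0, g 0 * ∏ i, K (v i) :=
      setIntegral_mono hF'int.integrableOn ((hKprodint.const_mul _).integrableOn) hF'le
    have a2 : ∫ v in Ti i0, g 0 * ∏ i, K (v i)
        ≤ ∫ v in Set.pi Set.univ C, g 0 * ∏ i, K (v i) :=
      setIntegral_mono_set ((hKprodint.const_mul _).integrableOn)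
        (ae_of_all _ fun v => mul_nonneg hg0 (hKprodnn v))
        (HasSubset.Subset.eventuallyLE hsub)
    have a3 : ∫ v in Set.pi Set.univ C, g 0 * ∏ i, K (v i)
        = g 0 * (h c0 * h 0 ^ m) := by
      rw [integral_const_mul, prod_setIntegral_pi K C hCm]
      congr 1
      rw [← Finset.mul_prod_erase Finset.univ _ (Finset.mem_univ i0)]
      have e1 : ∫ x in C i0, K x = h c0 := by
        simp only [hC, if_pos rfl]
        exact hIoiK c0 hc0
      rw [e1]
      congr 1
      have e2 : ∀ j ∈ Finset.univ.erase i0, ∫ x in C j, K x = h 0 := by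
        intro j hj
        simp only [hC, if_neg (Finset.ne_of_mem_erase hj)]
        exact hIoiK 0 le_rfl
      rw [Finset.prod_congr rfl e2, Finset.prod_const,
        Finset.card_erase_of_mem (Finset.mem_univ i0), Finset.card_univ, Fintype.card_fin]
      norm_num
    linarith
  -- covering
  have hcover : ∀ v ∈ T, v ∈ TB ∨ ∃ i, v ∈ Ti i := by
    intro v hv
    by_cases hs : ∑ j, v j ≤ t - c0
    · exact Or.inl ⟨hv, hs⟩
    · refine Or.inr ?_
      by_contra hcon
      have hle : ∀ i, v i ≤ c0 := by
        intro i
        by_contra hgt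
        push_neg at hgt
        exact hcon ⟨i, Set.mem_inter hv hgt⟩
      have hsum : ∑ j, v j ≤ ((m:ℝ)+1) * c0 := by
        calc ∑ j, v j ≤ ∑ _j : Fin (m+1), c0 := Finset.sum_le_sum fun j _ => hle j
          _ = ((m:ℝ)+1) * c0 := by
              rw [Finset.sum_const, Finset.card_univ, Fintype.card_fin, nsmul_eq_mul]
              push_cast; ring
      have hnat : (m:ℝ) + 1 ≤ 2 ^ (m+1) - 1 := by
        have h2 : (m : ℕ) + 2 ≤ 2 ^ (m+1) := by
          have := Nat.lt_two_pow_self (n := m+1)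
          omega
        have h3 : ((m:ℝ) + 2) ≤ (2:ℝ) ^ (m+1) := by exact_mod_cast h2
        linarith
      have ht2 : t = 2 ^ (m+1) * c0 := by
        rw [hc0def]; field_simp
      apply hs
      calc ∑ j, v j ≤ ((m:ℝ)+1) * c0 := hsum
        _ ≤ (2 ^ (m+1) - 1) * c0 := by nlinarith
        _ = t - c0 := by rw [ht2]; ring
  -- main decomposition
  have hmain : ∫ v in T, F' v ≤ (∫ v in TB, F' v) + ∑ i, ∫ v in Ti i, F' v := by
    have hTind : ∀ v, T.indicator F' v ≤ TB.indicator F' v + ∑ i, (Ti i).indicator F' v := by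
      intro v
      have hnn1 : 0 ≤ TB.indicator F' v := Set.indicator_nonneg (fun x _ => hF'nn x) v
      have hnn2 : 0 ≤ ∑ i, (Ti i).indicator F' v :=
        Finset.sum_nonneg fun i _ => Set.indicator_nonneg (fun x _ => hF'nn x) v
      by_cases hv : v ∈ T
      · rw [Set.indicator_of_mem hv]
        rcases hcover v hv with hB | ⟨i, hi⟩
        · rw [← Set.indicator_of_mem hB F']
          linarith
        · have h1 : F' v ≤ ∑ i, (Ti i).indicator F' v := by
            rw [← Set.indicator_of_mem hi F']
            exact Finset.single_le_sum
              (fun j _ => Set.indicator_nonneg (fun x _ => hF'nn x) v) (Finset.mem_univ i)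
          linarith
      · rw [Set.indicator_of_notMem hv]
        linarith
    have e1 : ∫ v in T, F' v = ∫ v, T.indicator F' v := (integral_indicator mT).symm
    have e2 : ∫ v, TB.indicator F' v + ∑ i, (Ti i).indicator F' v
        = (∫ v in TB, F' v) + ∑ i, ∫ v in Ti i, F' v := by
      rw [integral_add (hF'int.indicator mTB)
        (integrable_finset_sum _ fun i _ => hF'int.indicator (mTi i)),
        integral_finset_sum _ fun i _ => hF'int.indicator (mTi i),
        integral_indicator mTB]
      congr 1
      exact Finset.sum_congr rfl fun i _ => integral_indicator (mTi i)
    rw [e1, ← e2]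
    exact integral_mono (hF'int.indicator mT)
      ((hF'int.indicator mTB).add (integrable_finset_sum _ fun i _ => hF'int.indicator (mTi i)))
      hTind
  -- final assembly
  have heq1 : ∫ u in Sset, Fk u = ∫ v in ⇑meq ⁻¹' Sset, Fk (meq v) :=
    (hmp.setIntegral_preimage_emb meq.measurableEmbedding Fk Sset).symm
  have step2 : ∫ v in T, Fk (meq v) = ∫ v in T, F' v := by
    apply setIntegral_congr_ae mT
    filter_upwards [haeN] with v hv hvT
    have e1 : ∏ i : Fin (m+1), k (meq v i -
        if (i : ℕ) = 0 then 0
        else meq v ⟨(i : ℕ) - 1, Nat.lt_of_le_of_lt (Nat.pred_le _) i.isLt⟩)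
        = ∏ i, K (v i) := by
      refine Finset.prod_congr rfl fun i _ => ?_
      rw [hgap v i]
      by_contra hne
      exact hv i (hNsub ⟨hne, le_of_lt (hvT.1 i)⟩)
    have h2 : ∑ j, v j < t := hvT.2
    simp only [hFk, hF']
    rw [hlast v, e1]
    rw [hGeq _ (by linarith : (0:ℝ) ≤ t - ∑ j, v j)]
  rw [heq1, hpre, step2]
  simp only [Nat.add_sub_cancel]
  have hsumA : ∑ i, ∫ v in Ti i, F' v ≤ ((m:ℝ)+1) * (g 0 * (h c0 * h 0 ^ m)) := by
    calc ∑ i, ∫ v in Ti i, F' v ≤ ∑ _i : Fin (m+1), g 0 * (h c0 * h 0 ^ m) :=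
          Finset.sum_le_sum fun i _ => pieceA i
      _ = ((m:ℝ)+1) * (g 0 * (h c0 * h 0 ^ m)) := by
          rw [Finset.sum_const, Finset.card_univ, Fintype.card_fin, nsmul_eq_mul]
          push_cast; ring
  have hnat : (m:ℝ) + 1 ≤ 2 ^ (m+1) - 1 := by
    have h2 : (m : ℕ) + 2 ≤ 2 ^ (m+1) := by
      have := Nat.lt_two_pow_self (n := m+1)
      omega
    have h3 : ((m:ℝ) + 2) ≤ (2:ℝ) ^ (m+1) := by exact_mod_cast h2
    linarith
  have hfinal : ((m:ℝ)+1) * (g 0 * (h c0 * h 0 ^ m))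
      ≤ (2 ^ (m+1) - 1) * g 0 * h 0 ^ m * h c0 := by
    have hx : 0 ≤ g 0 * (h c0 * h 0 ^ m) := mul_nonneg hg0 (mul_nonneg hcnn (pow_nonneg h0nn m))
    nlinarith
  calc ∫ v in T, F' v ≤ (∫ v in TB, F' v) + ∑ i, ∫ v in Ti i, F' v := hmain
    _ ≤ g c0 * h 0 ^ (m+1) + ((m:ℝ)+1) * (g 0 * (h c0 * h 0 ^ m)) := add_le_add pieceB hsumA
    _ ≤ (2 ^ (m+1) - 1) * g 0 * h 0 ^ m * h c0 + h 0 ^ (m+1) * g c0 := by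
        have e : g c0 * h 0 ^ (m+1) = h 0 ^ (m+1) * g c0 := mul_comm _ _
        linarith [hfinal]
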